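/- Let F(x) = Σ_{j=0}^{g-1} C(n,j) x^{n−j} + (C(n,g) − α) x^{n−g} + Σ_{j=g+1}^{d} a_j x^{n−j} be a real polynomial where 2 ≤ g ≤ d ≤ n, α > 0, and a_j are reals. Let R(x) be the remainder of dividing F(x) by F'(x) using quotient (x/n + 1/n). Then the leading term of R(x) is α·((n−g)/n − 1)·x^{n−g}; in particular R has degree n−g and negative leading coefficient. -/

import Mathlib

open Polynomial

/-- For the polynomial
`F(x) = Σ_{j<g} C(n,j) x^{n-j} + (C(n,g) - α) x^{n-g} + Σ_{j=g+1}^{d} a_j x^{n-j}`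
with `2 ≤ g ≤ d ≤ n` and `α > 0`, the remainder `R` in
`F = (x/n + 1/n)·F' + R` has leading term `α·((n-g)/n - 1)·x^{n-g}`; in
particular `deg R = n - g` and the leading coefficient of `R` is negative. -/
theorem stmt_13 (n g d : ℕ) (hg : 2 ≤ g) (hgd : g ≤ d) (hdn : d ≤ n)
    (α : ℝ) (hα : 0 < α) (a : ℕ → ℝ)
    (F R : Polynomial ℝ)
    (hF : F = (∑ j ∈ Finset.range g, C ((n.choose j : ℝ)) * X ^ (n - j))
        + C ((n.choose g : ℝ) - α) * X ^ (n - g)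
        + ∑ j ∈ Finset.Icc (g + 1) d, C (a j) * X ^ (n - j))
    (hR : F = (C ((n : ℝ)⁻¹) * X + C ((n : ℝ)⁻¹)) * (derivative F) + R) :
    R.coeff (n - g) = α * (((n : ℝ) - g) / n - 1) ∧
      R.natDegree = n - g ∧ R.leadingCoeff < 0 := by
  have hn0 : 0 < n := by omega
  have hnR : (n : ℝ) ≠ 0 := Nat.cast_ne_zero.2 (by omega)
  set c : ℝ := (n : ℝ)⁻¹ with hcdef
  -- coefficient formula for R
  have hc : ∀ k : ℕ, R.coeff k = (1 - c * k) * F.coeff k - c * (k + 1) * F.coeff (k + 1) := by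
    have hRd : R = F - (C c * X + C c) * derivative F := by linear_combination -hR
    intro k
    rw [hRd]
    cases k with
    | zero => simp [coeff_derivative]
    | succ k =>
      simp [add_mul, mul_assoc, coeff_C_mul, coeff_X_mul, coeff_derivative]
      ring
  -- coefficient formula for F
  have hFc : ∀ j, j ≤ n → F.coeff (n - j) =
      (if j < g then (n.choose j : ℝ) else if j = g then (n.choose g : ℝ) - α
        else if j ≤ d then a j else 0) := by
    intro j hj
    rw [hF]
    simp only [coeff_add, finset_sum_coeff, coeff_C_mul, coeff_X_pow, mul_ite, mul_one, mul_zero]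
    have e1 : ∀ i ∈ Finset.range g,
        (if n - j = n - i then (n.choose i : ℝ) else 0) = if j = i then (n.choose i : ℝ) else 0 := by
      intro i hi
      have : i < g := Finset.mem_range.1 hi
      rcases eq_or_ne j i with h | h
      · simp [h]
      · rw [if_neg (by omega), if_neg h]
    have e2 : ∀ i ∈ Finset.Icc (g + 1) d,
        (if n - j = n - i then a i else 0) = if j = i then a i else 0 := by
      intro i hi
      have := Finset.mem_Icc.1 hi
      rcases eq_or_ne j i with h | h
      · simp [h]
      · rw [if_neg (by omega), if_neg h]
    rw [Finset.sum_congr rfl e1, Finset.sum_congr rfl e2, Finset.sum_ite_eq, Finset.sum_ite_eq]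
    have hmid : (if n - j = n - g then (n.choose g : ℝ) - α else 0)
        = if j = g then (n.choose g : ℝ) - α else 0 := by
      rcases eq_or_ne j g with h | h
      · simp [h]
      · rw [if_neg (by omega), if_neg h]
    rw [hmid]
    by_cases h1 : j < g
    · have h2 : ¬ j = g := by omega
      have h3 : ¬ (g + 1 ≤ j) := by omega
      simp [h1, h2, h3, Finset.mem_range, Finset.mem_Icc]
    · by_cases h2 : j = g
      · have h3 : ¬ (g + 1 ≤ j) := by omega
        simp [h1, h2, h3, Finset.mem_range, Finset.mem_Icc]
      · by_cases h3 : j ≤ d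
        · have h4 : g + 1 ≤ j := by omega
          simp [h1, h2, h3, h4, Finset.mem_range, Finset.mem_Icc]
        · simp [h1, h2, h3, Finset.mem_range, Finset.mem_Icc]
  -- F has no coefficients above degree n
  have hF0 : ∀ k, n < k → F.coeff k = 0 := by
    intro k hk
    rw [hF]
    simp only [coeff_add, finset_sum_coeff, coeff_C_mul, coeff_X_pow, mul_ite, mul_one, mul_zero]
    rw [Finset.sum_eq_zero (fun i _ => by rw [if_neg (by omega)]),
      Finset.sum_eq_zero (fun i _ => by rw [if_neg (by omega)]), if_neg (by omega)]
    simp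
  -- the cast choose identity: j * C(n,j) = (n - j + 1) * C(n, j-1) for 1 ≤ j ≤ n
  have hid : ∀ j, 1 ≤ j → j ≤ n →
      (n.choose j : ℝ) * j = (n.choose (j - 1) : ℝ) * ((n : ℝ) - j + 1) := by
    intro j hj1 hjn
    have h := Nat.choose_succ_right_eq n (j - 1)
    have hj : j - 1 + 1 = j := by omega
    rw [hj] at h
    have h2 : n - (j - 1) = n - j + 1 := by omega
    rw [h2] at h
    have := congrArg (fun m : ℕ => (m : ℝ)) h
    push_cast [Nat.cast_sub hjn] at this
    linarith [this]
  -- the main coefficient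
  have hmain : R.coeff (n - g) = α * (((n : ℝ) - g) / n - 1) := by
    rw [hc]
    have h1 : F.coeff (n - g) = (n.choose g : ℝ) - α := by
      rw [hFc g (by omega), if_neg (lt_irrefl g), if_pos rfl]
    have hk1 : n - g + 1 = n - (g - 1) := by omega
    have h2 : F.coeff (n - g + 1) = (n.choose (g - 1) : ℝ) := by
      rw [hk1, hFc (g - 1) (by omega), if_pos (by omega)]
    rw [h1, h2]
    have hcast : ((n - g : ℕ) : ℝ) = (n : ℝ) - g := by
      push_cast [Nat.cast_sub (show g ≤ n by omega)]; ring
    rw [hcast, hcdef]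
    have hidg := hid g (by omega) (by omega)
    field_simp
    linear_combination hidg
  -- all higher coefficients vanish
  have hhigh : ∀ k, n - g < k → R.coeff k = 0 := by
    intro k hk
    rw [hc k]
    rcases le_or_gt k n with hkn | hkn
    · set j := n - k with hjdef
      have hjg : j < g := by omega
      have hk' : k = n - j := by omega
      have h1 : F.coeff k = (n.choose j : ℝ) := by
        rw [hk', hFc j (by omega), if_pos hjg]
      have hcast : (k : ℝ) = (n : ℝ) - j := by
        rw [hk']; push_cast [Nat.cast_sub (show j ≤ n by omega)]; ring
      rcases Nat.eq_zero_or_pos j with hj0 | hj0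
      · have h2 : F.coeff (k + 1) = 0 := hF0 _ (by omega)
        rw [h1, h2, hcast, hj0, hcdef]
        simp
        field_simp
        simp
      · have hk1 : k + 1 = n - (j - 1) := by omega
        have h2 : F.coeff (k + 1) = (n.choose (j - 1) : ℝ) := by
          rw [hk1, hFc (j - 1) (by omega), if_pos (by omega)]
        rw [h1, h2, hcast, hcdef]
        have hidj := hid j (by omega) (by omega)
        field_simp
        linear_combination hidj
    · rw [hF0 k hkn, hF0 (k + 1) (by omega)]
      ring
  -- degree and leading coefficient
  have hneg : α * (((n : ℝ) - g) / n - 1) < 0 := by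
    have hgpos : (0 : ℝ) < g := by positivity
    have hnpos : (0 : ℝ) < n := by positivity
    have h : ((n : ℝ) - g) / n - 1 = -((g : ℝ) / n) := by field_simp; ring
    rw [h]
    exact mul_neg_of_pos_of_neg hα (neg_lt_zero.2 (div_pos hgpos hnpos))
  have hne : R.coeff (n - g) ≠ 0 := by rw [hmain]; exact ne_of_lt hneg
  have hdeg : R.natDegree = n - g := by
    refine le_antisymm ?_ (le_natDegree_of_ne_zero hne)
    exact natDegree_le_iff_coeff_eq_zero.2 fun m hm => hhigh m hm
  refine ⟨hmain, hdeg, ?_⟩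
  rw [Polynomial.leadingCoeff, hdeg, hmain]
  exact hneg
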